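/- In elliptic coordinates Z = 2√τ cosh(ξ+iη), Z' = 2√τ cosh(ξ'+iη'), with z = Z/√(2τ), z' = conj(Z')/√(2τ), one has |√(ω(√n Z)ω(√n Z'))·e^{nF(a⁻¹)}| = e^{−n(ξ−ξ_τ)²g(ξ+iη)}·e^{−n(ξ'−ξ_τ)²g(ξ'+iη')}, where F(a⁻¹) = 1 + log τ + ξ + ξ' + i(η'−η) + ½e^{−2(ξ+iη)} + ½e^{−2(ξ'−iη')} and g is the function defined by g(ξ+iη) = −G_η(ξ)/(ξ−ξ_τ)². -/

import Mathlib

/-- The elliptic Ginibre weight. -/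
noncomputable def wfun (τ : ℝ) (Z : ℂ) : ℝ :=
  Real.exp (-(Z.re) ^ 2 / (1 + τ) - (Z.im) ^ 2 / (1 - τ))

noncomputable def Gfun (τ η : ℝ) (ξ : ℝ) : ℝ :=
  1 / 2 + ξ - (-Real.log τ / 2) + Real.exp (-2 * ξ) * Real.cos (2 * η) / 2
    - 2 * τ * Real.cosh ξ ^ 2 * Real.cos η ^ 2 / (1 + τ)
    - 2 * τ * Real.sinh ξ ^ 2 * Real.sin η ^ 2 / (1 - τ)

/-- `g(ξ+iη) = -G_η(ξ)/(ξ-ξ_τ)²`. -/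
noncomputable def gfun (τ : ℝ) (ξ η : ℝ) : ℝ :=
  -Gfun τ η ξ / (ξ - (-Real.log τ / 2)) ^ 2

lemma sqrt_exp' (x : ℝ) : Real.sqrt (Real.exp x) = Real.exp (x / 2) := by
  rw [show Real.exp x = Real.exp (x / 2) * Real.exp (x / 2) by
    rw [← Real.exp_add]; ring_nf, Real.sqrt_mul_self (Real.exp_nonneg _)]

lemma Gfun_crit (τ : ℝ) (hτ0 : 0 < τ) (hτ1 : τ < 1) (η : ℝ) :
    Gfun τ η (-Real.log τ / 2) = 0 := by
  have h1τ : (1:ℝ) + τ ≠ 0 := by nlinarith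
  have h2τ : (1:ℝ) - τ ≠ 0 := by nlinarith
  set a := Real.exp (-Real.log τ / 2) with ha_def
  set b := Real.exp (Real.log τ / 2) with hb_def
  have hab : a * b = 1 := by
    rw [ha_def, hb_def, ← Real.exp_add]; ring_nf; exact Real.exp_zero
  have ha2 : a ^ 2 = τ⁻¹ := by
    rw [ha_def, sq, ← Real.exp_add, show -Real.log τ / 2 + -Real.log τ / 2 = -Real.log τ by ring,
      Real.exp_neg, Real.exp_log hτ0]
  have hb2 : b ^ 2 = τ := by
    rw [hb_def, sq, ← Real.exp_add, show Real.log τ / 2 + Real.log τ / 2 = Real.log τ by ring,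
      Real.exp_log hτ0]
  have ha2' : a ^ 2 * τ = 1 := by rw [ha2]; field_simp
  have he : Real.exp (-2 * (-Real.log τ / 2)) = τ := by
    rw [show -2 * (-Real.log τ / 2) = Real.log τ by ring, Real.exp_log hτ0]
  have hneg : -(-Real.log τ / 2) = Real.log τ / 2 := by ring
  have hcosh : Real.cosh (-Real.log τ / 2) ^ 2 = (1 + τ)^2 / (4 * τ) := by
    rw [Real.cosh_eq, hneg, ← ha_def, ← hb_def]
    field_simp
    linear_combination (4:ℝ) * ha2' + 8 * τ * hab + 4 * τ * hb2
  have hsinh : Real.sinh (-Real.log τ / 2) ^ 2 = (1 - τ)^2 / (4 * τ) := by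
    rw [Real.sinh_eq, hneg, ← ha_def, ← hb_def]
    field_simp
    linear_combination (4:ℝ) * ha2' - 8 * τ * hab + 4 * τ * hb2
  have hpyth : Real.sin η ^ 2 + Real.cos η ^ 2 = 1 := Real.sin_sq_add_cos_sq η
  have hcos2 : Real.cos (2 * η) = Real.cos η ^ 2 - Real.sin η ^ 2 := by
    rw [Real.cos_two_mul]; linarith
  unfold Gfun
  rw [he, hcosh, hsinh, hcos2]
  field_simp
  linear_combination (-4 : ℝ) * hpyth

lemma cosh_reim (ξ η : ℝ) :
    Complex.cosh ((ξ : ℂ) + (η : ℂ) * Complex.I)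
      = ((Real.cosh ξ * Real.cos η : ℝ) : ℂ) + ((Real.sinh ξ * Real.sin η : ℝ) : ℂ) * Complex.I := by
  rw [Complex.cosh_add, Complex.cosh_mul_I, Complex.sinh_mul_I]
  push_cast [← Complex.ofReal_cosh, ← Complex.ofReal_sinh, ← Complex.ofReal_cos,
    ← Complex.ofReal_sin]
  ring

theorem weight_times_eFainv_abs (τ : ℝ) (hτ0 : 0 < τ) (hτ1 : τ < 1)
    (n : ℕ) (hn : 1 ≤ n) (ξ ξ' η η' : ℝ) (Z Z' z z' Fainv : ℂ)
    (hZ : Z = 2 * (Real.sqrt τ : ℂ) * Complex.cosh ((ξ : ℂ) + (η : ℂ) * Complex.I))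
    (hZ' : Z' = 2 * (Real.sqrt τ : ℂ) * Complex.cosh ((ξ' : ℂ) + (η' : ℂ) * Complex.I))
    (hz : z = Z / (Real.sqrt (2 * τ) : ℂ))
    (hz' : z' = (starRingEnd ℂ) Z' / (Real.sqrt (2 * τ) : ℂ))
    (hF : Fainv = 1 + Complex.log (τ : ℂ) + (ξ : ℂ) + (ξ' : ℂ)
        + ((η' : ℂ) - (η : ℂ)) * Complex.I
        + (1 / 2) * Complex.exp (-2 * ((ξ : ℂ) + (η : ℂ) * Complex.I))
        + (1 / 2) * Complex.exp (-2 * ((ξ' : ℂ) - (η' : ℂ) * Complex.I))) :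
    Real.sqrt (wfun τ ((Real.sqrt n : ℂ) * Z) * wfun τ ((Real.sqrt n : ℂ) * Z'))
        * ‖Complex.exp ((n : ℂ) * Fainv)‖
      = Real.exp (-(n : ℝ) * (ξ - (-Real.log τ / 2)) ^ 2 * gfun τ ξ η)
        * Real.exp (-(n : ℝ) * (ξ' - (-Real.log τ / 2)) ^ 2 * gfun τ ξ' η') := by
  have hg : ∀ x y : ℝ, -(n : ℝ) * (x - (-Real.log τ / 2)) ^ 2 * gfun τ x y
      = (n : ℝ) * Gfun τ y x := by
    intro x y
    unfold gfun
    rcases eq_or_ne x (-Real.log τ / 2) with h | h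
    · rw [h, Gfun_crit τ hτ0 hτ1]; ring_nf
    · have hd : (x - (-Real.log τ / 2)) ^ 2 ≠ 0 :=
        pow_ne_zero _ (sub_ne_zero.mpr h)
      calc -(n : ℝ) * (x - (-Real.log τ / 2)) ^ 2 * (-Gfun τ y x / (x - (-Real.log τ / 2)) ^ 2)
          = (n : ℝ) * Gfun τ y x
            * ((x - (-Real.log τ / 2)) ^ 2 / (x - (-Real.log τ / 2)) ^ 2) := by ring
        _ = (n : ℝ) * Gfun τ y x := by rw [div_self hd, mul_one]
  rw [hg, hg]
  have hsq : Real.sqrt τ ^ 2 = τ := Real.sq_sqrt hτ0.le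
  have hnn : (Real.sqrt (n:ℝ)) ^ 2 = (n:ℝ) := Real.sq_sqrt (Nat.cast_nonneg n)
  have hZc : Z = ((2 * Real.sqrt τ * (Real.cosh ξ * Real.cos η) : ℝ) : ℂ)
      + ((2 * Real.sqrt τ * (Real.sinh ξ * Real.sin η) : ℝ) : ℂ) * Complex.I := by
    rw [hZ, cosh_reim]; push_cast; ring
  have hZc' : Z' = ((2 * Real.sqrt τ * (Real.cosh ξ' * Real.cos η') : ℝ) : ℂ)
      + ((2 * Real.sqrt τ * (Real.sinh ξ' * Real.sin η') : ℝ) : ℂ) * Complex.I := by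
    rw [hZ', cosh_reim]; push_cast; ring
  have hZre : Z.re = 2 * Real.sqrt τ * (Real.cosh ξ * Real.cos η) := by rw [hZc]; simp only [Complex.add_re, Complex.add_im, Complex.mul_re, Complex.mul_im, Complex.I_re, Complex.I_im, Complex.ofReal_re, Complex.ofReal_im]; ring
  have hZim : Z.im = 2 * Real.sqrt τ * (Real.sinh ξ * Real.sin η) := by rw [hZc]; simp only [Complex.add_re, Complex.add_im, Complex.mul_re, Complex.mul_im, Complex.I_re, Complex.I_im, Complex.ofReal_re, Complex.ofReal_im]; ring
  have hZre' : Z'.re = 2 * Real.sqrt τ * (Real.cosh ξ' * Real.cos η') := by rw [hZc']; simp only [Complex.add_re, Complex.add_im, Complex.mul_re, Complex.mul_im, Complex.I_re, Complex.I_im, Complex.ofReal_re, Complex.ofReal_im]; ring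
  have hZim' : Z'.im = 2 * Real.sqrt τ * (Real.sinh ξ' * Real.sin η') := by rw [hZc']; simp only [Complex.add_re, Complex.add_im, Complex.mul_re, Complex.mul_im, Complex.I_re, Complex.I_im, Complex.ofReal_re, Complex.ofReal_im]; ring
  have hFre : Fainv.re = 1 + Real.log τ + ξ + ξ'
      + Real.exp (-2 * ξ) * Real.cos (2 * η) / 2
      + Real.exp (-2 * ξ') * Real.cos (2 * η') / 2 := by
    rw [hF, ← Complex.ofReal_log hτ0.le]
    simp [Complex.exp_re, Complex.add_re, Complex.add_im, Complex.mul_re, Complex.mul_im,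
      Complex.sub_re, Complex.sub_im]
    ring
  unfold wfun
  rw [← Real.exp_add, sqrt_exp', Complex.norm_exp, ← Real.exp_add, ← Real.exp_add]
  congr 1
  have hkey : ∀ A : ℝ, (Real.sqrt (n:ℝ) * (2 * Real.sqrt τ * A)) ^ 2
      = (n : ℝ) * (4 * τ) * A ^ 2 := by
    intro A
    rw [mul_pow, hnn, mul_pow, mul_pow, hsq]; ring
  have hZnre : ((Real.sqrt (n:ℝ) : ℂ) * Z).re = Real.sqrt (n:ℝ) * Z.re := by simp
  have hZnim : ((Real.sqrt (n:ℝ) : ℂ) * Z).im = Real.sqrt (n:ℝ) * Z.im := by simp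
  have hZnre' : ((Real.sqrt (n:ℝ) : ℂ) * Z').re = Real.sqrt (n:ℝ) * Z'.re := by simp
  have hZnim' : ((Real.sqrt (n:ℝ) : ℂ) * Z').im = Real.sqrt (n:ℝ) * Z'.im := by simp
  have hnFre : ((n : ℂ) * Fainv).re = (n:ℝ) * Fainv.re := by simp
  rw [hZnre, hZnim, hZnre', hZnim', hnFre, hFre, hZre, hZim, hZre', hZim',
    hkey, hkey, hkey, hkey]
  unfold Gfun
  ring
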